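/- Let b ≥ 2 be an integer. The function h(w) := 1/(e^w − 1) − b/(e^{wb} − 1), defined for w > 0, is strictly decreasing on (0, ∞), tends to (b−1)/2 as w → 0⁺, and tends to 0 as w → ∞; in particular, for every real μ with 0 < μ < 1 there exists a unique w > 0 with h(w) = μ(b−1)/2. -/

import Mathlib

open Real Filter Set

lemma sinh_mul_lt (n : ℕ) (hn : 2 ≤ n) {t : ℝ} (ht : 0 < t) :
    (n : ℝ) * Real.sinh t < Real.sinh ((n : ℝ) * t) := by
  induction n, hn using Nat.le_induction with
  | base =>
      have h1 : (1:ℝ) < Real.cosh t := Real.one_lt_cosh.2 ht.ne'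
      have h2 : 0 < Real.sinh t := Real.sinh_pos_iff.2 ht
      have h3 := Real.sinh_two_mul t
      push_cast
      nlinarith
  | succ n hn ih =>
      have h1 : (1:ℝ) < Real.cosh t := Real.one_lt_cosh.2 ht.ne'
      have h2 : 0 < Real.sinh t := Real.sinh_pos_iff.2 ht
      have hb0 : (0:ℝ) < (n:ℝ)*t := by positivity
      have h3 : 0 < Real.sinh ((n:ℝ)*t) := Real.sinh_pos_iff.2 hb0
      have h4 : (1:ℝ) < Real.cosh ((n:ℝ)*t) := Real.one_lt_cosh.2 hb0.ne'
      have e : Real.sinh (((n:ℝ)+1) * t)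
          = Real.sinh ((n:ℝ)*t) * Real.cosh t + Real.cosh ((n:ℝ)*t) * Real.sinh t := by
        rw [add_mul, one_mul, Real.sinh_add]
      push_cast
      rw [e]
      nlinarith

lemma exp_sub_one_eq (w : ℝ) :
    Real.exp w - 1 = 2 * Real.exp (w/2) * Real.sinh (w/2) := by
  have hA : Real.exp (w/2) * Real.exp (w/2) = Real.exp w := by
    rw [← Real.exp_add]; ring_nf
  have hB : Real.exp (w/2) * Real.exp (-(w/2)) = 1 := by
    rw [← Real.exp_add]; simp
  rw [Real.sinh_eq]
  linear_combination hB - hA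

lemma hderiv (b : ℕ) (hb : 2 ≤ b) {w : ℝ} (hw : 0 < w) :
    HasDerivAt (fun w : ℝ => 1 / (Real.exp w - 1) - (b:ℝ) / (Real.exp (w * b) - 1))
      (-(Real.exp w / (Real.exp w - 1)^2)
        + (b:ℝ)^2 * Real.exp (w * b) / (Real.exp (w * b) - 1)^2) w := by
  have hwb : 0 < w * (b:ℝ) := by positivity
  have he : Real.exp w - 1 ≠ 0 := by
    have : (1:ℝ) < Real.exp w := by
      calc (1:ℝ) = Real.exp 0 := Real.exp_zero.symm
      _ < Real.exp w := Real.exp_lt_exp.2 hw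
    linarith
  have hE : Real.exp (w * b) - 1 ≠ 0 := by
    have : (1:ℝ) < Real.exp (w*b) := by
      calc (1:ℝ) = Real.exp 0 := Real.exp_zero.symm
      _ < Real.exp (w*b) := Real.exp_lt_exp.2 hwb
    linarith
  have d1 : HasDerivAt (fun w : ℝ => Real.exp w - 1) (Real.exp w) w :=
    (Real.hasDerivAt_exp w).sub_const 1
  have d2 : HasDerivAt (fun w : ℝ => Real.exp (w * b) - 1) (Real.exp (w * b) * b) w := by
    have : HasDerivAt (fun w : ℝ => w * (b:ℝ)) (b:ℝ) w := by
      simpa using (hasDerivAt_id w).mul_const (b:ℝ)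
    exact (this.exp).sub_const 1
  have q1 : HasDerivAt (fun w : ℝ => 1 / (Real.exp w - 1))
      ((0 * (Real.exp w - 1) - 1 * Real.exp w) / (Real.exp w - 1)^2) w :=
    (hasDerivAt_const w (1:ℝ)).div d1 he
  have q2 : HasDerivAt (fun w : ℝ => (b:ℝ) / (Real.exp (w * b) - 1))
      ((0 * (Real.exp (w*b) - 1) - (b:ℝ) * (Real.exp (w*b) * b)) / (Real.exp (w*b) - 1)^2) w :=
    (hasDerivAt_const w ((b:ℝ))).div d2 hE
  refine (q1.sub q2).congr_deriv ?_
  ring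

lemma hderiv_neg (b : ℕ) (hb : 2 ≤ b) {w : ℝ} (hw : 0 < w) :
    -(Real.exp w / (Real.exp w - 1)^2)
        + (b:ℝ)^2 * Real.exp (w * b) / (Real.exp (w * b) - 1)^2 < 0 := by
  have hwb : 0 < w * (b:ℝ) := by positivity
  have he : (0:ℝ) < Real.exp w - 1 := by
    have : (1:ℝ) < Real.exp w := by
      calc (1:ℝ) = Real.exp 0 := Real.exp_zero.symm
      _ < Real.exp w := Real.exp_lt_exp.2 hw
    linarith
  have hE : (0:ℝ) < Real.exp (w * b) - 1 := by
    have : (1:ℝ) < Real.exp (w*b) := by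
      calc (1:ℝ) = Real.exp 0 := Real.exp_zero.symm
      _ < Real.exp (w*b) := Real.exp_lt_exp.2 hwb
    linarith
  set s := Real.sinh (w/2) with hs
  set S := Real.sinh ((w*b)/2) with hS
  have hs0 : 0 < s := Real.sinh_pos_iff.2 (by positivity)
  have hbs : (b:ℝ) * s < S := by
    have := sinh_mul_lt b hb (t := w/2) (by positivity)
    have harg : (b:ℝ) * (w/2) = (w*b)/2 := by ring
    rw [harg] at this
    exact this
  have hS0 : 0 < S := lt_trans (by positivity) hbs
  have sq1 : (Real.exp w - 1)^2 = 4 * Real.exp w * s^2 := by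
    have hA : Real.exp (w/2) * Real.exp (w/2) = Real.exp w := by
      rw [← Real.exp_add]; ring_nf
    rw [exp_sub_one_eq]
    linear_combination 4 * s^2 * hA
  have sq2 : (Real.exp (w*b) - 1)^2 = 4 * Real.exp (w*b) * S^2 := by
    have hA : Real.exp ((w*b)/2) * Real.exp ((w*b)/2) = Real.exp (w*b) := by
      rw [← Real.exp_add]; ring_nf
    rw [exp_sub_one_eq]
    linear_combination 4 * S^2 * hA
  have key : (b:ℝ)^2 * Real.exp (w*b) * (Real.exp w - 1)^2
      < Real.exp w * (Real.exp (w*b) - 1)^2 := by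
    rw [sq1, sq2]
    have hsq : ((b:ℝ)*s)^2 < S^2 := by
      have := mul_pos (sub_pos.2 hbs) (show (0:ℝ) < S + (b:ℝ)*s by positivity)
      nlinarith
    have hp := mul_pos (Real.exp_pos w) (Real.exp_pos (w*b))
    nlinarith
  rw [← sub_neg, ]
  have h2 : (b:ℝ)^2 * Real.exp (w*b) / (Real.exp (w*b) - 1)^2
      < Real.exp w / (Real.exp w - 1)^2 := by
    rw [div_lt_div_iff₀ (by positivity) (by positivity)]
    nlinarith
  linarith

lemma sum_range_cast (b : ℕ) : (∑ j ∈ Finset.range b, (j:ℝ)) = (b:ℝ)*((b:ℝ)-1)/2 := by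
  induction b with
  | zero => simp
  | succ n ih => rw [Finset.sum_range_succ, ih]; push_cast; ring

lemma hsum_eq (b : ℕ) (hb : 2 ≤ b) {w : ℝ} (hw : 0 < w) :
    1 / (Real.exp w - 1) - (b:ℝ) / (Real.exp (w * b) - 1)
      = ∑ j ∈ Finset.range b, (Real.exp ((j:ℝ)*w) - 1) / (Real.exp (w * b) - 1) := by
  have he : Real.exp w - 1 ≠ 0 := by
    have : (1:ℝ) < Real.exp w := by
      calc (1:ℝ) = Real.exp 0 := Real.exp_zero.symm
      _ < Real.exp w := Real.exp_lt_exp.2 hw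
    linarith
  have hE : Real.exp (w * b) - 1 ≠ 0 := by
    have : (1:ℝ) < Real.exp (w*b) := by
      calc (1:ℝ) = Real.exp 0 := Real.exp_zero.symm
      _ < Real.exp (w*b) := Real.exp_lt_exp.2 (by positivity)
    linarith
  have hEpow : Real.exp (w*b) = Real.exp w ^ b := by
    rw [mul_comm]; exact Real.exp_nat_mul w b
  have gs : (∑ j ∈ Finset.range b, Real.exp w ^ j) * (Real.exp w - 1)
      = Real.exp w ^ b - 1 := geom_sum_mul _ b
  have hterm : ∀ j ∈ Finset.range b, (Real.exp ((j:ℝ)*w) - 1) / (Real.exp (w * b) - 1)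
      = (Real.exp w ^ j - 1) / (Real.exp (w * b) - 1) := by
    intro j _
    rw [Real.exp_nat_mul]
  rw [Finset.sum_congr rfl hterm, ← Finset.sum_div, Finset.sum_sub_distrib,
    Finset.sum_const, Finset.card_range, nsmul_eq_mul, mul_one]
  field_simp
  have hE' : Real.exp w ^ b - 1 ≠ 0 := hEpow ▸ hE
  rw [mul_comm (b:ℝ) w, hEpow, eq_div_iff hE', sub_mul, div_mul_cancel₀ _ hE']
  linear_combination (-1) * gs

lemma term_tendsto (b j : ℕ) (hb : 2 ≤ b) :
    Tendsto (fun w : ℝ => (Real.exp ((j:ℝ)*w) - 1) / (Real.exp (w * b) - 1))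
      (nhdsWithin 0 (Set.Ioi 0)) (nhds ((j:ℝ)/(b:ℝ))) := by
  have hb0 : (b:ℝ) ≠ 0 := by positivity
  have dnum : HasDerivAt (fun w : ℝ => Real.exp ((j:ℝ)*w)) (j:ℝ) 0 := by
    have h1 : HasDerivAt (fun w : ℝ => (j:ℝ)*w) (j:ℝ) 0 := by
      simpa using (hasDerivAt_id (0:ℝ)).const_mul (j:ℝ)
    simpa using h1.exp
  have dden : HasDerivAt (fun w : ℝ => Real.exp (w * (b:ℝ))) (b:ℝ) 0 := by
    have h1 : HasDerivAt (fun w : ℝ => w * (b:ℝ)) (b:ℝ) 0 := by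
      simpa using (hasDerivAt_id (0:ℝ)).mul_const (b:ℝ)
    simpa using h1.exp
  have hmono : nhdsWithin (0:ℝ) (Set.Ioi 0) ≤ nhdsWithin 0 {(0:ℝ)}ᶜ :=
    nhdsWithin_mono _ (fun x hx => by simpa using (ne_of_gt hx))
  have tnum := (hasDerivAt_iff_tendsto_slope.1 dnum).mono_left hmono
  have tden := (hasDerivAt_iff_tendsto_slope.1 dden).mono_left hmono
  have tdiv := tnum.div tden hb0
  refine tdiv.congr' ?_
  filter_upwards [self_mem_nhdsWithin] with w hw
  have hw0 : w ≠ 0 := ne_of_gt hw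
  rw [Pi.div_apply, slope_def_field, slope_def_field, sub_zero, div_div_div_cancel_right₀ hw0]
  simp
/-- properties of `h(w) = 1/(e^w-1) - b/(e^{wb}-1)` on `(0,∞)`:
strictly decreasing, limit `(b-1)/2` at `0⁺`, limit `0` at `∞`, and for each
`0 < μ < 1` a unique `w > 0` with `h(w) = μ(b-1)/2`. -/
theorem saddle_point_function_decreasing
    (b : ℕ) (hb : 2 ≤ b) (h : ℝ → ℝ)
    (hh : ∀ w : ℝ, h w =
      1 / (Real.exp w - 1) - (b : ℝ) / (Real.exp (w * (b : ℝ)) - 1)) :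
    StrictAntiOn h (Set.Ioi 0) ∧
      Filter.Tendsto h (nhdsWithin 0 (Set.Ioi 0)) (nhds (((b : ℝ) - 1) / 2)) ∧
      Filter.Tendsto h Filter.atTop (nhds 0) ∧
      ∀ μ : ℝ, 0 < μ → μ < 1 →
        ∃! w : ℝ, 0 < w ∧ h w = μ * ((b : ℝ) - 1) / 2 := by
  obtain rfl : h = fun w : ℝ =>
      1 / (Real.exp w - 1) - (b : ℝ) / (Real.exp (w * (b : ℝ)) - 1) := funext hh
  set f : ℝ → ℝ := fun w : ℝ =>
      1 / (Real.exp w - 1) - (b : ℝ) / (Real.exp (w * (b : ℝ)) - 1) with hf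
  have hcont : ContinuousOn f (Set.Ioi 0) := fun x hx =>
    ((hderiv b hb hx).continuousAt).continuousWithinAt
  have hanti : StrictAntiOn f (Set.Ioi 0) := by
    refine strictAntiOn_of_deriv_neg (convex_Ioi 0) hcont (fun x hx => ?_)
    rw [interior_Ioi] at hx
    rw [(hderiv b hb hx).deriv]
    exact hderiv_neg b hb hx
  have hb1 : (1:ℝ) ≤ (b:ℝ) - 1 := by
    have : (2:ℝ) ≤ (b:ℝ) := by exact_mod_cast hb
    linarith
  -- limit at 0⁺
  have hlim0 : Filter.Tendsto f (nhdsWithin 0 (Set.Ioi 0)) (nhds (((b : ℝ) - 1) / 2)) := by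
    have hsum : Filter.Tendsto
        (fun w : ℝ => ∑ j ∈ Finset.range b, (Real.exp ((j:ℝ)*w) - 1) / (Real.exp (w * b) - 1))
        (nhdsWithin 0 (Set.Ioi 0)) (nhds (∑ j ∈ Finset.range b, (j:ℝ)/(b:ℝ))) :=
      tendsto_finset_sum _ (fun j _ => term_tendsto b j hb)
    have hval : (∑ j ∈ Finset.range b, (j:ℝ)/(b:ℝ)) = ((b:ℝ) - 1) / 2 := by
      rw [← Finset.sum_div, sum_range_cast]
      have hbpos : (0:ℝ) < (b:ℝ) := by positivity
      field_simp
    rw [← hval]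
    refine hsum.congr' ?_
    filter_upwards [self_mem_nhdsWithin] with w hw
    exact (hsum_eq b hb hw).symm
  -- limit at ∞
  have hlimtop : Filter.Tendsto f Filter.atTop (nhds 0) := by
    have t1 : Filter.Tendsto (fun w : ℝ => (Real.exp w - 1)⁻¹) Filter.atTop (nhds 0) :=
      (Filter.tendsto_atTop_add_const_right _ (-1)
        Real.tendsto_exp_atTop).inv_tendsto_atTop
    have t2 : Filter.Tendsto (fun w : ℝ => (Real.exp (w * (b:ℝ)) - 1)⁻¹)
        Filter.atTop (nhds 0) := by
      have hbpos : (0:ℝ) < (b:ℝ) := by positivity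
      have : Filter.Tendsto (fun w : ℝ => w * (b:ℝ)) Filter.atTop Filter.atTop :=
        Filter.tendsto_id.atTop_mul_const hbpos
      exact (Filter.tendsto_atTop_add_const_right _ (-1)
        (Real.tendsto_exp_atTop.comp this)).inv_tendsto_atTop
    have := t1.sub (t2.const_mul (b:ℝ))
    simp only [mul_zero, sub_zero] at this
    refine this.congr (fun w => ?_)
    simp [hf, one_div, div_eq_mul_inv]
  refine ⟨hanti, hlim0, hlimtop, ?_⟩
  -- existence and uniqueness
  intro μ hμ0 hμ1
  set c : ℝ := μ * ((b:ℝ) - 1) / 2 with hc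
  have hc0 : 0 < c := by positivity
  have hcl : c < ((b:ℝ) - 1) / 2 := by
    rw [hc, div_lt_div_iff₀ (by norm_num) (by norm_num)]
    nlinarith
  -- point near 0 with f x > c
  obtain ⟨x, hxc, hx0⟩ :=
    ((hlim0.eventually_const_lt hcl).and self_mem_nhdsWithin).exists
  -- point far out with f y < c
  obtain ⟨y, hyc, hy⟩ :=
    ((hlimtop.eventually_lt_const hc0).and (Filter.eventually_gt_atTop (max x 0))).exists
  have hx0' : 0 < x := hx0
  have hy0 : 0 < y := lt_of_le_of_lt (le_max_right x 0) hy
  have hxy : x < y := lt_of_le_of_lt (le_max_left x 0) hy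
  have hsub : Set.Icc x y ⊆ Set.Ioi 0 := fun z hz => lt_of_lt_of_le hx0' hz.1
  have hivt := intermediate_value_Icc' (le_of_lt hxy) (hcont.mono hsub)
  have hcmem : c ∈ Set.Icc (f y) (f x) := ⟨le_of_lt hyc, le_of_lt hxc⟩
  obtain ⟨w, hwmem, hwc⟩ := hivt hcmem
  have hw0 : 0 < w := lt_of_lt_of_le hx0' hwmem.1
  refine ⟨w, ⟨hw0, hwc⟩, ?_⟩
  rintro v ⟨hv0, hvc⟩
  exact hanti.injOn hv0 hw0 (by rw [hvc, hwc])
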